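/- Let Y be a real m×n matrix with singular value decomposition Y = UΣVᵀ, and λ > 0. Then X̂ = U·soft(Σ;λ)·Vᵀ, obtained by applying the soft threshold soft(σ;λ) = max(σ-λ,0) to each singular value, is a global minimizer of X ↦ (1/2)‖Y-X‖_F² + λ‖X‖_*, where ‖X‖_* is the nuclear norm (sum of singular values). -/

import Mathlib

open Matrix

/-- Singular values of a real rectangular matrix: square roots of the
eigenvalues of `Aᵀ * A` (the nuclear norm, their sum, is order-independent). -/
noncomputable def svals {m n : ℕ} (A : Matrix (Fin m) (Fin n) ℝ) : Fin n → ℝ :=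
  fun i => Real.sqrt ((show (Aᵀ * A).IsHermitian from Matrix.isHermitian_conjTranspose_mul_self A).eigenvalues i)

/-- Nuclear norm: sum of singular values. -/
noncomputable def nuclearNorm {m n : ℕ} (A : Matrix (Fin m) (Fin n) ℝ) : ℝ :=
  ∑ i, svals A i

/-! ### Auxiliary lemmas -/

section Aux

open Polynomial

/-- Cauchy–Schwarz for the dot product on `Fin n → ℝ`. -/
lemma svt_cs_dot {n : ℕ} (a b : Fin n → ℝ) :
    a ⬝ᵥ b ≤ Real.sqrt (a ⬝ᵥ a) * Real.sqrt (b ⬝ᵥ b) := by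
  have h1 : (a ⬝ᵥ b) ^ 2 ≤ (a ⬝ᵥ a) * (b ⬝ᵥ b) := by
    simpa [dotProduct, sq, Finset.sum_mul_sum] using
      Finset.sum_mul_sq_le_sq_mul_sq Finset.univ a b
  have ha : 0 ≤ a ⬝ᵥ a := Finset.sum_nonneg fun i _ => mul_self_nonneg _
  calc a ⬝ᵥ b ≤ |a ⬝ᵥ b| := le_abs_self _
    _ = Real.sqrt ((a ⬝ᵥ b) ^ 2) := (Real.sqrt_sq_eq_abs _).symm
    _ ≤ Real.sqrt ((a ⬝ᵥ a) * (b ⬝ᵥ b)) := Real.sqrt_le_sqrt h1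
    _ = _ := Real.sqrt_mul ha _

/-- The key dual inequality: if `G` has operator norm at most `lam`, then
`⟨G, X⟩ ≤ lam * ‖X‖_*`. -/
lemma svt_dual_ineq {m n : ℕ} (lam : ℝ) (hlam : 0 ≤ lam) (G X : Matrix (Fin m) (Fin n) ℝ)
    (hG : ∀ w : Fin n → ℝ, (G *ᵥ w) ⬝ᵥ (G *ᵥ w) ≤ lam ^ 2 * (w ⬝ᵥ w)) :
    trace (Gᵀ * X) ≤ lam * nuclearNorm X := by
  set hH := Matrix.isHermitian_conjTranspose_mul_self X with hHdef
  set w : Fin n → Fin n → ℝ := fun i => ⇑(hH.eigenvectorBasis i) with hw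
  have horth : ∀ i j, w i ⬝ᵥ w j = if i = j then 1 else 0 := by
    intro i j
    have h := orthonormal_iff_ite.mp hH.eigenvectorBasis.orthonormal i j
    simpa [hw, PiLp.inner_apply, RCLike.inner_apply, dotProduct, mul_comm] using h
  set W : Matrix (Fin n) (Fin n) ℝ := Matrix.of w with hW
  have hWWt : W * Wᵀ = 1 := by
    ext i j
    simpa [hW, Matrix.mul_apply, Matrix.one_apply, dotProduct] using horth i j
  have hWtW : Wᵀ * W = 1 := mul_eq_one_comm.mp hWWt
  have htrace : trace (Gᵀ * X) = ∑ i, (G *ᵥ w i) ⬝ᵥ (X *ᵥ w i) := by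
    have h1 : ∑ i, (G *ᵥ w i) ⬝ᵥ (X *ᵥ w i) = trace ((G * Wᵀ)ᵀ * (X * Wᵀ)) := by
      rw [Matrix.trace]
      refine Finset.sum_congr rfl fun i _ => ?_
      simp only [Matrix.diag, Matrix.mul_apply, Matrix.transpose_apply, dotProduct]
      exact Finset.sum_congr rfl fun j _ => rfl
    rw [h1, Matrix.transpose_mul, Matrix.transpose_transpose]
    rw [show W * Gᵀ * (X * Wᵀ) = W * (Gᵀ * X) * Wᵀ by
      simp only [Matrix.mul_assoc]]
    rw [Matrix.trace_mul_cycle, ← Matrix.mul_assoc, hWtW, Matrix.one_mul]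
  have hXnorm : ∀ i, (X *ᵥ w i) ⬝ᵥ (X *ᵥ w i) = hH.eigenvalues i := by
    intro i
    have h1 : (X *ᵥ w i) ⬝ᵥ (X *ᵥ w i) = w i ⬝ᵥ ((Xᴴ * X) *ᵥ w i) := by
      rw [Matrix.conjTranspose_eq_transpose_of_trivial, ← Matrix.mulVec_mulVec,
        Matrix.dotProduct_mulVec, Matrix.mulVec_transpose, dotProduct_comm]
    rw [h1, hH.mulVec_eigenvectorBasis]
    have := horth i i
    simp only [if_pos rfl] at this
    simp only [ite_true] at this
    simp [dotProduct_smul]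
    exact (congrArg (_ * ·) this).trans (mul_one _)
  have hbound : ∀ i, (G *ᵥ w i) ⬝ᵥ (X *ᵥ w i) ≤ lam * svals X i := by
    intro i
    have h1 := svt_cs_dot (G *ᵥ w i) (X *ᵥ w i)
    have hwi : w i ⬝ᵥ w i = 1 := by simpa using horth i i
    have h2 : Real.sqrt ((G *ᵥ w i) ⬝ᵥ (G *ᵥ w i)) ≤ lam := by
      have := hG (w i)
      rw [hwi, mul_one] at this
      calc Real.sqrt ((G *ᵥ w i) ⬝ᵥ (G *ᵥ w i)) ≤ Real.sqrt (lam ^ 2) := Real.sqrt_le_sqrt this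
        _ = lam := Real.sqrt_sq hlam
    have h3 : Real.sqrt ((X *ᵥ w i) ⬝ᵥ (X *ᵥ w i)) = svals X i := by
      rw [hXnorm i]; rfl
    calc (G *ᵥ w i) ⬝ᵥ (X *ᵥ w i)
        ≤ Real.sqrt ((G *ᵥ w i) ⬝ᵥ (G *ᵥ w i)) * Real.sqrt ((X *ᵥ w i) ⬝ᵥ (X *ᵥ w i)) := h1
      _ ≤ lam * svals X i := by
          apply mul_le_mul_of_nonneg_right h2 (Real.sqrt_nonneg _) |>.trans
          exact le_of_eq (by rw [h3])
  rw [htrace, nuclearNorm, Finset.mul_sum]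
  exact Finset.sum_le_sum fun i _ => hbound i

lemma svt_orth_preserve {k : ℕ} (P : Matrix (Fin k) (Fin k) ℝ) (hP : Pᵀ * P = 1)
    (z : Fin k → ℝ) : (P *ᵥ z) ⬝ᵥ (P *ᵥ z) = z ⬝ᵥ z := by
  have h : (P *ᵥ z) ⬝ᵥ (P *ᵥ z) = z ⬝ᵥ ((Pᵀ * P) *ᵥ z) := by
    rw [← Matrix.mulVec_mulVec, Matrix.dotProduct_mulVec, Matrix.mulVec_transpose,
      dotProduct_comm]
  rw [h, hP, Matrix.one_mulVec]

lemma svt_sum_dite_le {m n : ℕ} (f : ℕ → ℝ) (hf : ∀ k, 0 ≤ f k) :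
    ∑ i : Fin m, (if _ : (i : ℕ) < n then f i else 0) ≤ ∑ j : Fin n, f j := by
  simp only [dite_eq_ite]
  set A : ℕ → ℝ := fun k => if k < n then f k else 0 with hA
  have hAnn : ∀ k, 0 ≤ A k := fun k => by by_cases h : k < n <;> simp [hA, h, hf k]
  calc ∑ i : Fin m, A i = ∑ k ∈ Finset.range m, A k := Fin.sum_univ_eq_sum_range A m
    _ ≤ ∑ k ∈ Finset.range (max m n), A k :=
        Finset.sum_le_sum_of_subset_of_nonneg
          (Finset.range_subset_range.mpr (le_max_left _ _)) (fun k _ _ => hAnn k)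
    _ = ∑ k ∈ Finset.range n, A k := by
        refine (Finset.sum_subset (Finset.range_subset_range.mpr (le_max_right _ _)) ?_).symm
        intro k _ hk
        simp only [Finset.mem_range, not_lt] at hk
        simp [hA, Nat.not_lt.mpr hk]
    _ = ∑ k ∈ Finset.range n, (fun k => if h : k < n then f k else 0) k := by
        refine Finset.sum_congr rfl fun k hk => ?_
        simp [Finset.mem_range.mp hk, hA]
    _ = ∑ j : Fin n, f j := by
        rw [← Fin.sum_univ_eq_sum_range (fun k => if h : k < n then f k else 0) n]
        refine Finset.sum_congr rfl fun j _ => by simp [j.isLt]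

lemma svt_mulVec_rectdiag {m n : ℕ} (M : Matrix (Fin m) (Fin n) ℝ)
    (hdiag : ∀ (i : Fin m) (j : Fin n), (i : ℕ) ≠ (j : ℕ) → M i j = 0)
    (z : Fin n → ℝ) (i : Fin m) :
    (M *ᵥ z) i = if h : (i : ℕ) < n then M i ⟨i, h⟩ * z ⟨i, h⟩ else 0 := by
  by_cases h : (i : ℕ) < n
  · rw [dif_pos h]
    rw [show (M *ᵥ z) i = ∑ j, M i j * z j from rfl]
    rw [Finset.sum_eq_single ⟨i, h⟩]
    · intro j _ hj
      rw [hdiag i j (by simpa [eq_comm, Fin.ext_iff] using fun hc => hj (by exact Fin.ext hc.symm)),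
        zero_mul]
    · simp
  · rw [dif_neg h]
    rw [show (M *ᵥ z) i = ∑ j, M i j * z j from rfl]
    refine Finset.sum_eq_zero fun j _ => ?_
    rw [hdiag i j (by omega), zero_mul]

lemma svt_op_bound {m n : ℕ} (lam : ℝ)
    (U : Matrix (Fin m) (Fin m) ℝ) (V : Matrix (Fin n) (Fin n) ℝ)
    (M : Matrix (Fin m) (Fin n) ℝ)
    (hU' : Uᵀ * U = 1) (hV : V * Vᵀ = 1)
    (hdiag : ∀ (i : Fin m) (j : Fin n), (i : ℕ) ≠ (j : ℕ) → M i j = 0)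
    (hM0 : ∀ i j, 0 ≤ M i j) (hMle : ∀ i j, M i j ≤ lam)
    (w : Fin n → ℝ) :
    ((U * M * Vᵀ) *ᵥ w) ⬝ᵥ ((U * M * Vᵀ) *ᵥ w) ≤ lam ^ 2 * (w ⬝ᵥ w) := by
  set z : Fin n → ℝ := Vᵀ *ᵥ w with hz
  have hzz : z ⬝ᵥ z = w ⬝ᵥ w := by
    apply svt_orth_preserve Vᵀ (by rwa [Matrix.transpose_transpose]) w
  have hsplit : (U * M * Vᵀ) *ᵥ w = U *ᵥ (M *ᵥ z) := by
    rw [hz, Matrix.mulVec_mulVec, Matrix.mulVec_mulVec]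
  rw [hsplit, svt_orth_preserve U hU' (M *ᵥ z)]
  set f : ℕ → ℝ := fun k => if h : k < n then lam ^ 2 * (z ⟨k, h⟩) ^ 2 else 0 with hf
  have hfnn : ∀ k, 0 ≤ f k := by
    intro k
    simp only [hf]
    by_cases h : k < n
    · simp only [dif_pos h]; positivity
    · simp [dif_neg h]
  have hterm : ∀ i : Fin m, (M *ᵥ z) i * (M *ᵥ z) i
      ≤ (if _ : (i : ℕ) < n then f (i : ℕ) else 0) := by
    intro i
    rw [svt_mulVec_rectdiag M hdiag z i]
    by_cases h : (i : ℕ) < n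
    · simp only [dif_pos h, hf]
      have h1 : M i ⟨i, h⟩ * z ⟨i, h⟩ * (M i ⟨i, h⟩ * z ⟨i, h⟩)
          = (M i ⟨i, h⟩) ^ 2 * (z ⟨i, h⟩) ^ 2 := by ring
      rw [h1]
      apply mul_le_mul_of_nonneg_right _ (sq_nonneg _)
      exact pow_le_pow_left₀ (hM0 i ⟨i, h⟩) (hMle i ⟨i, h⟩) 2
    · simp [dif_neg h]
  calc (M *ᵥ z) ⬝ᵥ (M *ᵥ z) = ∑ i, (M *ᵥ z) i * (M *ᵥ z) i := rfl
    _ ≤ ∑ i : Fin m, (if _ : (i : ℕ) < n then f (i : ℕ) else 0) :=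
        Finset.sum_le_sum fun i _ => hterm i
    _ ≤ ∑ j : Fin n, f (j : ℕ) := svt_sum_dite_le f hfnn
    _ = lam ^ 2 * (z ⬝ᵥ z) := by
        rw [dotProduct, Finset.mul_sum]
        refine Finset.sum_congr rfl fun j _ => ?_
        simp only [hf, dif_pos j.isLt, Fin.eta, sq]
    _ = lam ^ 2 * (w ⬝ᵥ w) := by rw [hzz]

lemma svt_charpoly_orth_conj {k : ℕ} (P : Matrix (Fin k) (Fin k) ℝ) (d : Fin k → ℝ)
    (hP : P * Pᵀ = 1) :
    (P * Matrix.diagonal d * Pᵀ).charpoly = ∏ i, (X - C (d i)) := by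
  classical
  set Pc : Matrix (Fin k) (Fin k) ℝ[X] := P.map C with hPc
  have hPcT : Pᵀ.map (C : ℝ → ℝ[X]) = Pcᵀ := by
    rw [hPc, Matrix.transpose_map]
  have hPcU : Pc * Pcᵀ = 1 := by
    rw [hPc, ← Matrix.transpose_map, ← Matrix.map_mul (f := (C : ℝ →+* ℝ[X])), hP]
    simp
  have hscalar : ∀ M : Matrix (Fin k) (Fin k) ℝ[X],
      M * Matrix.scalar (Fin k) X = Matrix.scalar (Fin k) X * M := by
    intro M
    ext i j
    simp [Matrix.scalar, Matrix.mul_diagonal, Matrix.diagonal_mul, mul_comm]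
  have hkey : charmatrix (P * Matrix.diagonal d * Pᵀ)
      = Pc * charmatrix (Matrix.diagonal d) * Pcᵀ := by
    rw [charmatrix, charmatrix]
    rw [Matrix.mul_sub, Matrix.sub_mul]
    congr 1
    · rw [hscalar Pc, Matrix.mul_assoc, hPcU, Matrix.mul_one]
    · simp only [RingHom.mapMatrix_apply]
      rw [Matrix.map_mul (f := (C : ℝ →+* ℝ[X])), Matrix.map_mul (f := (C : ℝ →+* ℝ[X])), hPcT]
  have hdet : (P * Matrix.diagonal d * Pᵀ).charpoly = (Matrix.diagonal d).charpoly := by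
    rw [Matrix.charpoly, Matrix.charpoly, hkey, Matrix.det_mul, Matrix.det_mul]
    have : Pc.det * Pcᵀ.det = 1 := by rw [← Matrix.det_mul, hPcU, Matrix.det_one]
    calc Pc.det * (charmatrix (Matrix.diagonal d)).det * Pcᵀ.det
        = (charmatrix (Matrix.diagonal d)).det * (Pc.det * Pcᵀ.det) := by ring
      _ = _ := by rw [this, mul_one]
  rw [hdet, Matrix.charpoly]
  have hcm : charmatrix (Matrix.diagonal d) = Matrix.diagonal (fun i => X - C (d i)) := by
    ext i j
    by_cases h : i = j
    · subst h; simp [charmatrix_apply_eq]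
    · simp [charmatrix_apply_ne _ _ _ h, Matrix.diagonal_apply_ne _ h,
        Matrix.diagonal_apply_ne' _ h]
  rw [hcm, Matrix.det_diagonal]

/-- Sums of a function over the eigenvalues of a symmetric matrix only depend on the
diagonalization. -/
lemma svt_eig_sum_eq {k : ℕ} (B : Matrix (Fin k) (Fin k) ℝ) (hB : B.IsHermitian)
    (P : Matrix (Fin k) (Fin k) ℝ) (d : Fin k → ℝ) (hP : P * Pᵀ = 1)
    (hBeq : B = P * Matrix.diagonal d * Pᵀ) (f : ℝ → ℝ) :
    ∑ i, f (hB.eigenvalues i) = ∑ i, f (d i) := by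
  classical
  set W : Matrix (Fin k) (Fin k) ℝ := (hB.eigenvectorUnitary : Matrix (Fin k) (Fin k) ℝ) with hW
  have hWU : W * Wᵀ = 1 := by
    have h := (Matrix.mem_unitaryGroup_iff).mp hB.eigenvectorUnitary.2
    rwa [Matrix.star_eq_conjTranspose, Matrix.conjTranspose_eq_transpose_of_trivial] at h
  have hspec : B = W * Matrix.diagonal hB.eigenvalues * Wᵀ := by
    have h := hB.spectral_theorem
    rwa [Unitary.conjStarAlgAut_apply, Matrix.star_eq_conjTranspose, Matrix.conjTranspose_eq_transpose_of_trivial,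
      show (RCLike.ofReal ∘ hB.eigenvalues : Fin k → ℝ) = hB.eigenvalues from funext fun i => rfl]
      at h
  have h1 : B.charpoly = ∏ i, (X - C (hB.eigenvalues i)) := by
    conv_lhs => rw [hspec]
    exact svt_charpoly_orth_conj W hB.eigenvalues hWU
  have h2 : B.charpoly = ∏ i, (X - C (d i)) := by
    conv_lhs => rw [hBeq]
    exact svt_charpoly_orth_conj P d hP
  have hms : (Finset.univ.val.map hB.eigenvalues) = Finset.univ.val.map d := by
    have e1 : (∏ i, (X - C (hB.eigenvalues i)))
        = ((Finset.univ.val.map hB.eigenvalues).map (fun a : ℝ => X - C a)).prod := by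
      rw [Multiset.map_map]; rfl
    have e2 : (∏ i, (X - C (d i)))
        = ((Finset.univ.val.map d).map (fun a : ℝ => X - C a)).prod := by
      rw [Multiset.map_map]; rfl
    have := h1.symm.trans h2
    rw [e1, e2] at this
    have r1 := roots_multiset_prod_X_sub_C (Finset.univ.val.map hB.eigenvalues)
    have r2 := roots_multiset_prod_X_sub_C (Finset.univ.val.map d)
    rw [← r1, ← r2, this]
  calc ∑ i, f (hB.eigenvalues i) = ((Finset.univ.val.map hB.eigenvalues).map f).sum := by
        rw [Multiset.map_map]; rfl
    _ = ((Finset.univ.val.map d).map f).sum := by rw [hms]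
    _ = ∑ i, f (d i) := by rw [Multiset.map_map]; rfl

lemma svt_soft_mul (lam s : ℝ) :
    (s - max (s - lam) 0) * max (s - lam) 0 = lam * max (s - lam) 0 := by
  rcases le_total (s - lam) 0 with h | h
  · rw [max_eq_right h]; ring
  · rw [max_eq_left h]; ring

lemma svt_entry_sum_trace {m n : ℕ} (G X : Matrix (Fin m) (Fin n) ℝ) :
    ∑ i, ∑ j, G i j * X i j = Matrix.trace (Gᵀ * X) := by
  rw [Matrix.trace, Finset.sum_comm]
  refine Finset.sum_congr rfl fun j _ => ?_
  simp [Matrix.diag, Matrix.mul_apply]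

lemma svt_rect_tmul_diag {m n : ℕ} (T : Matrix (Fin m) (Fin n) ℝ)
    (hdiag : ∀ (i : Fin m) (j : Fin n), (i : ℕ) ≠ (j : ℕ) → T i j = 0) :
    Tᵀ * T = Matrix.diagonal (fun j : Fin n =>
      if h : (j : ℕ) < m then (T ⟨j, h⟩ j) ^ 2 else 0) := by
  ext j l
  rw [Matrix.mul_apply]
  simp only [Matrix.transpose_apply]
  by_cases hjl : j = l
  · subst hjl
    rw [Matrix.diagonal_apply_eq]
    by_cases h : (j : ℕ) < m
    · rw [dif_pos h, Finset.sum_eq_single ⟨(j : ℕ), h⟩]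
      · rw [sq]
      · intro i _ hi
        have hne : (i : ℕ) ≠ (j : ℕ) := fun hc => hi (Fin.ext hc)
        rw [hdiag i j hne, zero_mul]
      · simp
    · rw [dif_neg h]
      refine Finset.sum_eq_zero fun i _ => ?_
      rw [hdiag i j (by omega), zero_mul]
  · rw [Matrix.diagonal_apply_ne _ hjl]
    refine Finset.sum_eq_zero fun i _ => ?_
    by_cases hij : (i : ℕ) = (j : ℕ)
    · have : (i : ℕ) ≠ (l : ℕ) := by
        intro hc; exact hjl (Fin.ext (hij.symm.trans hc))
      rw [hdiag i l this, mul_zero]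
    · rw [hdiag i j hij, zero_mul]

lemma svt_trace_diag_prod {m n : ℕ} (M T : Matrix (Fin m) (Fin n) ℝ)
    (hT : ∀ (i : Fin m) (j : Fin n), (i : ℕ) ≠ (j : ℕ) → T i j = 0) :
    Matrix.trace (Mᵀ * T) = ∑ j : Fin n,
      (if h : (j : ℕ) < m then M ⟨j, h⟩ j * T ⟨j, h⟩ j else 0) := by
  rw [Matrix.trace]
  refine Finset.sum_congr rfl fun j _ => ?_
  rw [Matrix.diag, Matrix.mul_apply]
  simp only [Matrix.transpose_apply]
  by_cases h : (j : ℕ) < m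
  · rw [dif_pos h, Finset.sum_eq_single ⟨(j : ℕ), h⟩]
    · intro i _ hi
      rw [hT i j (fun hc => hi (Fin.ext hc)), mul_zero]
    · simp
  · rw [dif_neg h]
    refine Finset.sum_eq_zero fun i _ => ?_
    rw [hT i j (by omega), mul_zero]

end Aux

theorem stmt_17 (m n : ℕ) (lam : ℝ) (hlam : 0 < lam)
    (Y S : Matrix (Fin m) (Fin n) ℝ)
    (U : Matrix (Fin m) (Fin m) ℝ) (V : Matrix (Fin n) (Fin n) ℝ)
    (hU : U * Uᵀ = 1) (hU' : Uᵀ * U = 1)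
    (hV : V * Vᵀ = 1) (hV' : Vᵀ * V = 1)
    (hSdiag : ∀ (i : Fin m) (j : Fin n), i.val ≠ j.val → S i j = 0)
    (hS0 : ∀ i j, 0 ≤ S i j)
    (hY : Y = U * S * Vᵀ) :
    ∀ X : Matrix (Fin m) (Fin n) ℝ,
      (1 / 2) * (∑ i, ∑ j, (Y i j - (U * Matrix.of (fun i j => max (S i j - lam) 0) * Vᵀ) i j) ^ 2)
          + lam * nuclearNorm (U * Matrix.of (fun i j => max (S i j - lam) 0) * Vᵀ)
        ≤ (1 / 2) * (∑ i, ∑ j, (Y i j - X i j) ^ 2) + lam * nuclearNorm X := by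
  intro X
  set T : Matrix (Fin m) (Fin n) ℝ := Matrix.of (fun i j => max (S i j - lam) 0) with hT
  set Xh : Matrix (Fin m) (Fin n) ℝ := U * T * Vᵀ with hXh
  set M : Matrix (Fin m) (Fin n) ℝ := S - T with hM
  set G : Matrix (Fin m) (Fin n) ℝ := U * M * Vᵀ with hG
  have hTapp : ∀ i j, T i j = max (S i j - lam) 0 := fun i j => rfl
  have hMapp : ∀ i j, M i j = S i j - max (S i j - lam) 0 := fun i j => rfl
  have hTdiag : ∀ (i : Fin m) (j : Fin n), (i : ℕ) ≠ (j : ℕ) → T i j = 0 := by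
    intro i j h
    rw [hTapp, hSdiag i j h, zero_sub, max_eq_right (by linarith)]
  have hMdiag : ∀ (i : Fin m) (j : Fin n), (i : ℕ) ≠ (j : ℕ) → M i j = 0 := by
    intro i j h
    rw [hMapp, hSdiag i j h, zero_sub, max_eq_right (by linarith)]; ring
  have hM0 : ∀ i j, 0 ≤ M i j := by
    intro i j
    rw [hMapp]
    rcases le_total (S i j - lam) 0 with h | h
    · rw [max_eq_right h]; linarith [hS0 i j]
    · rw [max_eq_left h]; linarith
  have hMle : ∀ i j, M i j ≤ lam := by
    intro i j
    rw [hMapp]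
    rcases le_total (S i j - lam) 0 with h | h
    · rw [max_eq_right h]; linarith
    · rw [max_eq_left h]; linarith
  have hGapp : ∀ i j, Y i j - Xh i j = G i j := by
    have hGY : Y - Xh = G := by
      rw [hY, hXh, hG, hM, Matrix.mul_sub, Matrix.sub_mul]
    intro i j
    rw [← hGY]; rfl
  -- the diagonal entries of the thresholded matrix
  set t : Fin n → ℝ := fun j => if h : (j : ℕ) < m then T ⟨(j : ℕ), h⟩ j else 0 with ht
  have ht0 : ∀ j, 0 ≤ t j := by
    intro j
    simp only [ht]
    by_cases h : (j : ℕ) < m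
    · rw [dif_pos h, hTapp]; exact le_max_right _ _
    · rw [dif_neg h]
  -- nuclear norm of the thresholded matrix
  have hnuc : nuclearNorm Xh = ∑ j, t j := by
    have hherm := Matrix.isHermitian_conjTranspose_mul_self Xh
    have hBeq : Xhᴴ * Xh = V * Matrix.diagonal (fun j => (t j) ^ 2) * Vᵀ := by
      rw [Matrix.conjTranspose_eq_transpose_of_trivial]
      have h1 : Xhᵀ = V * (Tᵀ * Uᵀ) := by
        rw [hXh, Matrix.transpose_mul, Matrix.transpose_mul, Matrix.transpose_transpose]
      rw [h1, hXh]
      have h2 : V * (Tᵀ * Uᵀ) * (U * T * Vᵀ) = V * (Tᵀ * T) * Vᵀ := by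
        calc V * (Tᵀ * Uᵀ) * (U * T * Vᵀ) = V * (Tᵀ * (Uᵀ * U) * T) * Vᵀ := by
              simp only [Matrix.mul_assoc]
          _ = V * (Tᵀ * T) * Vᵀ := by rw [hU', Matrix.mul_one]
      have hdfun : (fun j : Fin n => if h : (j : ℕ) < m then (T ⟨(j : ℕ), h⟩ j) ^ 2 else 0)
          = fun j => (t j) ^ 2 := by
        funext j
        simp only [ht]
        by_cases h : (j : ℕ) < m
        · rw [dif_pos h, dif_pos h]
        · rw [dif_neg h, dif_neg h]; norm_num
      rw [h2, svt_rect_tmul_diag T hTdiag, hdfun]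
    have := svt_eig_sum_eq (Xhᴴ * Xh) hherm V (fun j => (t j) ^ 2) hV hBeq Real.sqrt
    calc nuclearNorm Xh = ∑ i, Real.sqrt (hherm.eigenvalues i) := rfl
      _ = ∑ j, Real.sqrt ((t j) ^ 2) := this
      _ = ∑ j, t j := Finset.sum_congr rfl fun j _ => Real.sqrt_sq (ht0 j)
  -- trace of Gᵀ * Xh
  have htr : Matrix.trace (Gᵀ * Xh) = lam * ∑ j, t j := by
    have h1 : Gᵀ * Xh = V * (Mᵀ * T) * Vᵀ := by
      rw [hG, hXh, Matrix.transpose_mul, Matrix.transpose_mul, Matrix.transpose_transpose]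
      calc Vᵀᵀ * (Mᵀ * Uᵀ) * (U * T * Vᵀ) = V * (Mᵀ * (Uᵀ * U) * T) * Vᵀ := by
            rw [Matrix.transpose_transpose]; simp only [Matrix.mul_assoc]
        _ = V * (Mᵀ * T) * Vᵀ := by rw [hU', Matrix.mul_one]
    rw [h1, Matrix.trace_mul_cycle, ← Matrix.mul_assoc, hV', Matrix.one_mul,
      svt_trace_diag_prod M T hTdiag, Finset.mul_sum]
    refine Finset.sum_congr rfl fun j _ => ?_
    simp only [ht]
    by_cases h : (j : ℕ) < m
    · rw [dif_pos h, dif_pos h, hMapp, hTapp, svt_soft_mul]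
    · rw [dif_neg h, dif_neg h, mul_zero]
  -- the dual inequality
  have hdual : Matrix.trace (Gᵀ * X) ≤ lam * nuclearNorm X :=
    svt_dual_ineq lam hlam.le G X (fun w => by
      rw [hG]; exact svt_op_bound lam U V M hU' hV hMdiag hM0 hMle w)
  -- expand the square
  have hexp : ∑ i, ∑ j, (Y i j - X i j) ^ 2
      = (∑ i, ∑ j, (Y i j - Xh i j) ^ 2)
        + (2 * Matrix.trace (Gᵀ * Xh) - 2 * Matrix.trace (Gᵀ * X))
        + ∑ i, ∑ j, (Xh i j - X i j) ^ 2 := by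
    rw [← svt_entry_sum_trace G Xh, ← svt_entry_sum_trace G X]
    have key : ∀ i j, (Y i j - X i j) ^ 2
        = (Y i j - Xh i j) ^ 2 + (2 * (G i j * Xh i j) - 2 * (G i j * X i j))
          + (Xh i j - X i j) ^ 2 := by
      intro i j
      have h := hGapp i j
      have hY' : Y i j = G i j + Xh i j := by linarith
      rw [hY']
      ring
    calc ∑ i, ∑ j, (Y i j - X i j) ^ 2
        = ∑ i, ∑ j, ((Y i j - Xh i j) ^ 2
            + (2 * (G i j * Xh i j) - 2 * (G i j * X i j)) + (Xh i j - X i j) ^ 2) := by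
          exact Finset.sum_congr rfl fun i _ => Finset.sum_congr rfl fun j _ => key i j
      _ = _ := by
          simp only [Finset.sum_add_distrib, Finset.sum_sub_distrib, ← Finset.mul_sum]
  have hC2 : 0 ≤ ∑ i, ∑ j, (Xh i j - X i j) ^ 2 :=
    Finset.sum_nonneg fun i _ => Finset.sum_nonneg fun j _ => sq_nonneg _
  -- conclude
  have hgoal : (1 / 2) * (∑ i, ∑ j, (Y i j - Xh i j) ^ 2) + lam * nuclearNorm Xh
      ≤ (1 / 2) * (∑ i, ∑ j, (Y i j - X i j) ^ 2) + lam * nuclearNorm X := by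
    rw [hexp, hnuc, htr]
    linarith [hdual, hC2, htr]
  exact hgoal
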